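/- Boundary bumping theorem: let X be a nonempty compact connected metric space and let E be a nonempty proper subset of X. If C is a connected component of E, then the closure of C meets the boundary of E: ∂C ∩ ∂E ≠ ∅ (boundaries relative to X). -/

import Mathlib

open Set Filter Topology

/-- In a compact Hausdorff space, a connected component contained in an open set is
contained in a clopen set contained in that open set. -/
lemma exists_isClopen_between {Y : Type*} [TopologicalSpace Y] [T2Space Y] [CompactSpace Y]
    (y : Y) {U : Set Y} (hU : IsOpen U) (h : connectedComponent y ⊆ U) :
    ∃ Z : Set Y, IsClopen Z ∧ y ∈ Z ∧ Z ⊆ U := by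
  let N := { s : Set Y // IsClopen s ∧ y ∈ s }
  rsuffices ⟨⟨s, hs, hs'⟩, hss⟩ : ∃ s : N, s.val ⊆ U
  · exact ⟨s, hs, hs', hss⟩
  haveI : Nonempty N := ⟨⟨univ, isClopen_univ, mem_univ y⟩⟩
  have hNcl : ∀ s : N, IsClosed s.val := fun s => s.property.1.1
  have hdir : Directed (· ⊇ ·) fun s : N => s.val := by
    rintro ⟨s, hs, hys⟩ ⟨t, ht, hyt⟩
    exact ⟨⟨s ∩ t, hs.inter ht, ⟨hys, hyt⟩⟩, inter_subset_left, inter_subset_right⟩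
  have hx : (⋂ s : N, s.val) = connectedComponent y := by
    rw [connectedComponent_eq_iInter_isClopen]
  have h_nhd : ∀ z ∈ ⋂ s : N, s.val, U ∈ 𝓝 z := fun z hz => by
    rw [hx] at hz
    exact hU.mem_nhds (h hz)
  exact exists_subset_nhds_of_compactSpace hdir hNcl h_nhd

/-- Boundary bumping for closed sets: in a compact connected metric space,
the connected component of a point in a proper closed set meets the closure of
the complement. -/
lemma closed_bumping {X : Type*} [MetricSpace X] [CompactSpace X] [ConnectedSpace X]
    {F : Set X} (hFc : IsClosed F) (hFproper : F ≠ Set.univ) {y : X} (hy : y ∈ F) :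
    (connectedComponentIn F y ∩ closure Fᶜ).Nonempty := by
  by_contra hcon
  rw [Set.not_nonempty_iff_eq_empty] at hcon
  have hCint : connectedComponentIn F y ⊆ interior F := by
    intro p hp
    have : p ∉ closure Fᶜ := fun hpc =>
      (hcon ▸ Set.mem_inter hp hpc : p ∈ (∅ : Set X)).elim
    rwa [closure_compl, Set.mem_compl_iff, not_not] at this
  -- work in the compact subtype F
  haveI : CompactSpace F := isCompact_iff_compactSpace.mp hFc.isCompact
  set y' : F := ⟨y, hy⟩
  have himg : connectedComponentIn F y = (↑) '' connectedComponent y' :=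
    connectedComponentIn_eq_image hy
  have hsub : connectedComponent y' ⊆ (↑) ⁻¹' (interior F) := by
    intro z hz
    exact hCint (himg ▸ Set.mem_image_of_mem _ hz)
  obtain ⟨Z, hZ, hyZ, hZsub⟩ :=
    exists_isClopen_between y' (isOpen_interior.preimage continuous_subtype_val) hsub
  -- P := image of Z in X is clopen in X
  set P : Set X := (↑) '' Z with hP
  have hPF : P ⊆ F := by rintro p ⟨z, _, rfl⟩; exact z.2
  have hPint : P ⊆ interior F := by rintro p ⟨z, hzZ, rfl⟩; exact hZsub hzZ
  have hPclosed : IsClosed P := (hZ.1.isCompact.image continuous_subtype_val).isClosed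
  have hPopen : IsOpen P := by
    obtain ⟨V, hV, hVZ⟩ := isOpen_induced_iff.mp hZ.2
    have : P = V ∩ interior F := by
      apply Set.Subset.antisymm
      · intro p hp
        obtain ⟨z, hzZ, rfl⟩ := hp
        refine ⟨?_, hPint ⟨z, hzZ, rfl⟩⟩
        have : z ∈ ((↑) ⁻¹' V : Set F) := hVZ ▸ hzZ
        exact this
      · rintro p ⟨hpV, hpF⟩
        refine ⟨⟨p, interior_subset hpF⟩, ?_, rfl⟩
        rw [← hVZ]; exact hpV
    rw [this]; exact hV.inter isOpen_interior
  have : P = ∅ ∨ P = Set.univ := isClopen_iff.mp ⟨hPclosed, hPopen⟩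
  rcases this with h | h
  · exact absurd h (Set.nonempty_iff_ne_empty.mp ⟨y, ⟨y', hyZ, rfl⟩⟩)
  · exact hFproper (Set.eq_univ_of_univ_subset (h ▸ hPF))

/-- Boundary bumping theorem: in a nonempty compact connected metric space `X`, every
connected component `C` of a nonempty proper subset `E` satisfies `∂C ∩ ∂E ≠ ∅`. -/
theorem boundary_bumping {X : Type*} [MetricSpace X] [CompactSpace X] [ConnectedSpace X]
    [Nonempty X] (E : Set X) (hE : E.Nonempty) (hEproper : E ≠ Set.univ)
    (x : X) (hx : x ∈ E) :
    (frontier (connectedComponentIn E x) ∩ frontier E).Nonempty := by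
  set C := connectedComponentIn E x with hC
  have hCE : C ⊆ E := connectedComponentIn_subset E x
  have hxC : x ∈ C := mem_connectedComponentIn hx
  -- Step 1: `closure C ∩ closure Eᶜ` is nonempty.
  have key : (closure C ∩ closure Eᶜ).Nonempty := by
    by_contra hcon
    rw [Set.not_nonempty_iff_eq_empty] at hcon
    have hsub : closure C ⊆ interior E := by
      intro p hp
      have : p ∉ closure Eᶜ := fun hpc =>
        (hcon ▸ Set.mem_inter hp hpc : p ∈ (∅ : Set X)).elim
      rwa [closure_compl, Set.mem_compl_iff, not_not] at this
    obtain ⟨W, hWopen, hCW, hWsub⟩ :=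
      normal_exists_closure_subset isClosed_closure isOpen_interior hsub
    set F := closure W with hF
    have hFE : F ⊆ E := hWsub.trans interior_subset
    have hFproper : F ≠ Set.univ := fun h => hEproper (Set.eq_univ_of_univ_subset (h ▸ hFE))
    have hxF : x ∈ F := subset_closure (hCW (subset_closure hxC))
    obtain ⟨p, hp1, hp2⟩ := closed_bumping isClosed_closure hFproper hxF
    -- `connectedComponentIn F x = C`
    have hcc : connectedComponentIn F x = C := by
      apply Set.Subset.antisymm
      · exact isPreconnected_connectedComponentIn.subset_connectedComponentIn
          (mem_connectedComponentIn hxF) ((connectedComponentIn_subset F x).trans hFE)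
      · exact isPreconnected_connectedComponentIn.subset_connectedComponentIn hxC
          (fun q hq => subset_closure (hCW (subset_closure hq)))
    rw [hcc] at hp1
    -- but `C ⊆ W` open, and `W ∩ Fᶜ = ∅`, so `p ∈ W` can't be in `closure Fᶜ`
    have hpW : p ∈ W := hCW (subset_closure hp1)
    obtain ⟨q, hqW, hqF⟩ := mem_closure_iff.mp hp2 W hWopen hpW
    exact hqF (subset_closure hqW)
  -- Step 2: any such point is in `frontier C ∩ frontier E`.
  obtain ⟨p, hp1, hp2⟩ := key
  refine ⟨p, ?_, ?_⟩
  · rw [frontier, Set.mem_diff]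
    refine ⟨hp1, fun hpi => ?_⟩
    have : p ∈ interior E := interior_mono hCE hpi
    rw [closure_compl] at hp2
    exact hp2 this
  · rw [frontier, Set.mem_diff]
    refine ⟨(closure_mono hCE) hp1, fun hpi => ?_⟩
    rw [closure_compl] at hp2
    exact hp2 hpi
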